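/- Let R be a ring such that every injective left R-module has finite flat dimension. Then every acyclic complex F^• of flat right R-modules is F-totally acyclic, i.e., F^• ⊗_R J is acyclic for every injective left R-module J. -/

import Mathlib

open CategoryTheory TensorProduct

universe u

set_option maxHeartbeats 1000000
noncomputable section

namespace NCT

variable (R : Type u) [Ring R]

/-- The subgroup of relations defining the balanced tensor product `M ⊗_R N`
of a right `R`-module `M` and a left `R`-module `N`. -/
def rel (M N : Type u) [AddCommGroup M] [Module Rᵐᵒᵖ M] [AddCommGroup N] [Module R N] :
    AddSubgroup (M ⊗[ℤ] N) :=
  AddSubgroup.closure {x | ∃ (r : R) (m : M) (n : N),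
    x = (MulOpposite.op r • m) ⊗ₜ[ℤ] n - m ⊗ₜ[ℤ] (r • n)}

/-- The balanced tensor product `M ⊗_R N` over a (possibly noncommutative) ring `R`. -/
def Tens (M N : Type u) [AddCommGroup M] [Module Rᵐᵒᵖ M] [AddCommGroup N] [Module R N] :
    Type u :=
  (M ⊗[ℤ] N) ⧸ rel R M N

instance (M N : Type u) [AddCommGroup M] [Module Rᵐᵒᵖ M] [AddCommGroup N] [Module R N] :
    AddCommGroup (Tens R M N) :=
  inferInstanceAs (AddCommGroup ((M ⊗[ℤ] N) ⧸ rel R M N))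

variable {R}

variable {M M' M'' N N' N'' : Type u}
  [AddCommGroup M] [Module Rᵐᵒᵖ M] [AddCommGroup M'] [Module Rᵐᵒᵖ M']
  [AddCommGroup M''] [Module Rᵐᵒᵖ M'']
  [AddCommGroup N] [Module R N] [AddCommGroup N'] [Module R N']
  [AddCommGroup N''] [Module R N'']

/-- The canonical projection. -/
def mk : M ⊗[ℤ] N →+ Tens R M N := QuotientAddGroup.mk' (rel R M N)

lemma mk_surjective : Function.Surjective (mk (R := R) (M := M) (N := N)) :=
  QuotientAddGroup.mk'_surjective _

private def intMap (f : M →ₗ[Rᵐᵒᵖ] M') (g : N →ₗ[R] N') : M ⊗[ℤ] N →ₗ[ℤ] M' ⊗[ℤ] N' :=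
  TensorProduct.map f.toAddMonoidHom.toIntLinearMap g.toAddMonoidHom.toIntLinearMap

private lemma intMap_id :
    intMap (LinearMap.id : M →ₗ[Rᵐᵒᵖ] M) (LinearMap.id : N →ₗ[R] N) = LinearMap.id :=
  TensorProduct.ext' fun _ _ => rfl

private lemma intMap_comp (f' : M' →ₗ[Rᵐᵒᵖ] M'') (f : M →ₗ[Rᵐᵒᵖ] M')
    (g' : N' →ₗ[R] N'') (g : N →ₗ[R] N') :
    intMap (f'.comp f) (g'.comp g) = (intMap f' g').comp (intMap f g) :=
  TensorProduct.ext' fun _ _ => rfl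

private lemma rel_le (f : M →ₗ[Rᵐᵒᵖ] M') (g : N →ₗ[R] N') :
    rel R M N ≤ (rel R M' N').comap (intMap f g).toAddMonoidHom := by
  rw [rel, AddSubgroup.closure_le]
  rintro x ⟨r, m, n, rfl⟩
  simp only [SetLike.mem_coe, AddSubgroup.mem_comap, LinearMap.toAddMonoidHom_coe, map_sub]
  apply AddSubgroup.subset_closure
  refine ⟨r, f m, g n, ?_⟩
  show f (MulOpposite.op r • m) ⊗ₜ[ℤ] g n - f m ⊗ₜ[ℤ] g (r • n) = _
  rw [map_smul, map_smul]

/-- Functoriality of the balanced tensor product. -/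
def tmap (f : M →ₗ[Rᵐᵒᵖ] M') (g : N →ₗ[R] N') : Tens R M N →+ Tens R M' N' :=
  QuotientAddGroup.map _ _ (intMap f g).toAddMonoidHom (rel_le f g)

lemma tmap_mk (f : M →ₗ[Rᵐᵒᵖ] M') (g : N →ₗ[R] N') (x : M ⊗[ℤ] N) :
    tmap f g (mk x) = mk (intMap f g x) := rfl

lemma tmap_id_apply (x : Tens R M N) :
    tmap (LinearMap.id : M →ₗ[Rᵐᵒᵖ] M) (LinearMap.id : N →ₗ[R] N) x = x := by
  obtain ⟨y, rfl⟩ := mk_surjective x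
  rw [tmap_mk, intMap_id]
  rfl

lemma tmap_tmap (f' : M' →ₗ[Rᵐᵒᵖ] M'') (f : M →ₗ[Rᵐᵒᵖ] M')
    (g' : N' →ₗ[R] N'') (g : N →ₗ[R] N') (x : Tens R M N) :
    tmap f' g' (tmap f g x) = tmap (f'.comp f) (g'.comp g) x := by
  obtain ⟨y, rfl⟩ := mk_surjective x
  rw [tmap_mk, tmap_mk, tmap_mk, intMap_comp]
  rfl

lemma tmap_add_left (f₁ f₂ : M →ₗ[Rᵐᵒᵖ] M') (g : N →ₗ[R] N') :
    tmap (f₁ + f₂) g = tmap f₁ g + tmap f₂ g := by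
  ext x
  obtain ⟨y, rfl⟩ := mk_surjective x
  have h : intMap (f₁ + f₂) g = intMap f₁ g + intMap f₂ g := by
    apply TensorProduct.ext'
    intro m n
    show (f₁ + f₂) m ⊗ₜ[ℤ] g n = f₁ m ⊗ₜ[ℤ] g n + f₂ m ⊗ₜ[ℤ] g n
    rw [LinearMap.add_apply, add_tmul]
  simp only [AddMonoidHom.add_apply, tmap_mk, h, LinearMap.add_apply]
  rw [map_add]

lemma tmap_add_right (f : M →ₗ[Rᵐᵒᵖ] M') (g₁ g₂ : N →ₗ[R] N') :
    tmap f (g₁ + g₂) = tmap f g₁ + tmap f g₂ := by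
  ext x
  obtain ⟨y, rfl⟩ := mk_surjective x
  have h : intMap f (g₁ + g₂) = intMap f g₁ + intMap f g₂ := by
    apply TensorProduct.ext'
    intro m n
    show f m ⊗ₜ[ℤ] (g₁ + g₂) n = f m ⊗ₜ[ℤ] g₁ n + f m ⊗ₜ[ℤ] g₂ n
    rw [LinearMap.add_apply, tmul_add]
  simp only [AddMonoidHom.add_apply, tmap_mk, h, LinearMap.add_apply]
  rw [map_add]


lemma tmap_zero_left (g : N →ₗ[R] N') :
    tmap (0 : M →ₗ[Rᵐᵒᵖ] M') g = 0 := by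
  ext x
  obtain ⟨y, rfl⟩ := mk_surjective x
  have h : intMap (0 : M →ₗ[Rᵐᵒᵖ] M') g = 0 := by
    apply TensorProduct.ext'
    intro m n
    show (0 : M →ₗ[Rᵐᵒᵖ] M') m ⊗ₜ[ℤ] g n = 0
    rw [LinearMap.zero_apply, zero_tmul]
  rw [tmap_mk, h]
  rfl

lemma tmap_zero_right (f : M →ₗ[Rᵐᵒᵖ] M') :
    tmap f (0 : N →ₗ[R] N') = 0 := by
  ext x
  obtain ⟨y, rfl⟩ := mk_surjective x
  have h : intMap f (0 : N →ₗ[R] N') = 0 := by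
    apply TensorProduct.ext'
    intro m n
    show f m ⊗ₜ[ℤ] (0 : N →ₗ[R] N') n = 0
    rw [LinearMap.zero_apply, tmul_zero]
  rw [tmap_mk, h]
  rfl

variable (R)

/-- The balanced tensor product, as a bifunctor on module categories. -/
def tensorBifunctor : ModuleCat.{u} Rᵐᵒᵖ ⥤ ModuleCat.{u} R ⥤ AddCommGrpCat.{u} where
  obj M :=
    { obj := fun N => AddCommGrpCat.of (Tens R M N)
      map := fun g => AddCommGrpCat.ofHom (tmap LinearMap.id g.hom)
      map_id := fun N => by
        ext x
        show tmap LinearMap.id LinearMap.id x = x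
        exact tmap_id_apply x
      map_comp := fun g g' => by
        ext x
        show tmap LinearMap.id (LinearMap.comp g'.hom g.hom) x
          = tmap LinearMap.id g'.hom (tmap LinearMap.id g.hom x)
        rw [tmap_tmap, LinearMap.id_comp] }
  map f :=
    { app := fun N => AddCommGrpCat.ofHom (tmap f.hom LinearMap.id)
      naturality := fun N N' g => by
        ext x
        show tmap f.hom LinearMap.id (tmap LinearMap.id g.hom x)
          = tmap LinearMap.id g.hom (tmap f.hom LinearMap.id x)
        rw [tmap_tmap, tmap_tmap, LinearMap.id_comp, LinearMap.comp_id,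
          LinearMap.id_comp, LinearMap.comp_id] }
  map_id := fun M => by
    ext N x
    show tmap LinearMap.id LinearMap.id x = x
    exact tmap_id_apply x
  map_comp := fun f f' => by
    ext N x
    show tmap (LinearMap.comp f'.hom f.hom) LinearMap.id x
      = tmap f'.hom LinearMap.id (tmap f.hom LinearMap.id x)
    rw [tmap_tmap, LinearMap.id_comp]

instance (M : ModuleCat.{u} Rᵐᵒᵖ) : ((tensorBifunctor R).obj M).Additive where
  map_add := by
    intro N N' g g'
    ext x
    show tmap LinearMap.id (g + g').hom x = _
    rw [ModuleCat.hom_add, tmap_add_right]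
    rfl

instance (N : ModuleCat.{u} R) : ((tensorBifunctor R).flip.obj N).Additive where
  map_add := by
    intro M M' f f'
    ext x
    show tmap (f + f').hom LinearMap.id x = _
    rw [ModuleCat.hom_add, tmap_add_left]
    rfl


instance : (tensorBifunctor R).PreservesZeroMorphisms where
  map_zero := by
    intro M M'
    ext N x
    show tmap (0 : ↑M →ₗ[Rᵐᵒᵖ] ↑M') LinearMap.id x = 0
    rw [tmap_zero_left]
    rfl

/-- A right `R`-module `M` is flat if `M ⊗_R -` preserves injectivity. -/
def FlatRight (M : Type u) [AddCommGroup M] [Module Rᵐᵒᵖ M] : Prop :=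
  ∀ (N N' : Type u) [AddCommGroup N] [Module R N] [AddCommGroup N'] [Module R N']
    (g : N →ₗ[R] N'), Function.Injective g →
      Function.Injective (tmap (LinearMap.id : M →ₗ[Rᵐᵒᵖ] M) g)

/-- A left `R`-module `N` is flat if `- ⊗_R N` preserves injectivity. -/
def FlatLeft (N : Type u) [AddCommGroup N] [Module R N] : Prop :=
  ∀ (M M' : Type u) [AddCommGroup M] [Module Rᵐᵒᵖ M] [AddCommGroup M'] [Module Rᵐᵒᵖ M']
    (f : M →ₗ[Rᵐᵒᵖ] M'), Function.Injective f →
      Function.Injective (tmap f (LinearMap.id : N →ₗ[R] N))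

end NCT

open CategoryTheory Limits

/-- A left `R`-module has finite flat dimension if it admits a finite resolution by flat
left `R`-modules. -/
def HasFiniteFlatDimension (R : Type u) [Ring R] (J : Type u) [AddCommGroup J]
    [Module R J] : Prop :=
  ∃ (m : ℕ) (G : ℕ → ModuleCat.{u} R) (d : ∀ n : ℕ, G (n + 1) ⟶ G n)
    (ε : G 0 ⟶ ModuleCat.of R J),
    (∀ n, NCT.FlatLeft R (G n)) ∧
    Function.Surjective ε ∧
    LinearMap.range (d 0).hom = LinearMap.ker ε.hom ∧
    (∀ n, LinearMap.range (d (n + 1)).hom = LinearMap.ker (d n).hom) ∧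
    (∀ n, m < n → Subsingleton (G n))

/-- The complex of abelian groups `F^• ⊗_R N` obtained by tensoring a complex of right
`R`-modules termwise with a left `R`-module `N`. -/
noncomputable def tensCplx {R : Type u} [Ring R]
    (Fc : CochainComplex (ModuleCat.{u} Rᵐᵒᵖ) ℤ) (N : ModuleCat.{u} R) :
    CochainComplex AddCommGrpCat.{u} ℤ :=
  (((NCT.tensorBifunctor R).flip.obj N).mapHomologicalComplex (ComplexShape.up ℤ)).obj Fc

namespace NCT

section Aux

variable {R : Type u} [Ring R]
variable {M M' M'' N N' N'' : Type u}
  [AddCommGroup M] [Module Rᵐᵒᵖ M] [AddCommGroup M'] [Module Rᵐᵒᵖ M']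
  [AddCommGroup M''] [Module Rᵐᵒᵖ M'']
  [AddCommGroup N] [Module R N] [AddCommGroup N'] [Module R N']
  [AddCommGroup N''] [Module R N'']

lemma mk_eq_zero_iff {x : M ⊗[ℤ] N} : (mk x : Tens R M N) = 0 ↔ x ∈ rel R M N :=
  QuotientAddGroup.eq_zero_iff x

private lemma intMap_id_right (g : N →ₗ[R] N') :
    intMap (LinearMap.id : M →ₗ[Rᵐᵒᵖ] M) g
      = LinearMap.lTensor M g.toAddMonoidHom.toIntLinearMap :=
  TensorProduct.ext' fun _ _ => rfl

private lemma intMap_id_left (f : M →ₗ[Rᵐᵒᵖ] M') :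
    intMap f (LinearMap.id : N →ₗ[R] N)
      = LinearMap.rTensor N f.toAddMonoidHom.toIntLinearMap :=
  TensorProduct.ext' fun _ _ => rfl

lemma tmap_comm (f : M →ₗ[Rᵐᵒᵖ] M') (g : N →ₗ[R] N') (x : Tens R M N) :
    tmap LinearMap.id g (tmap f LinearMap.id x) = tmap f LinearMap.id (tmap LinearMap.id g x) := by
  rw [tmap_tmap, tmap_tmap, LinearMap.id_comp, LinearMap.comp_id, LinearMap.id_comp,
    LinearMap.comp_id]

lemma tmap_surjective_right {g : N →ₗ[R] N'} (hg : Function.Surjective g) :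
    Function.Surjective (tmap (LinearMap.id : M →ₗ[Rᵐᵒᵖ] M) g) := by
  intro x
  obtain ⟨z, rfl⟩ := mk_surjective x
  obtain ⟨w, hw⟩ := LinearMap.lTensor_surjective M
    (show Function.Surjective g.toAddMonoidHom.toIntLinearMap from hg) z
  exact ⟨mk w, by rw [tmap_mk, intMap_id_right]; exact congrArg mk hw⟩

lemma tmap_surjective_left {f : M →ₗ[Rᵐᵒᵖ] M'} (hf : Function.Surjective f) :
    Function.Surjective (tmap f (LinearMap.id : N →ₗ[R] N)) := by
  intro x
  obtain ⟨z, rfl⟩ := mk_surjective x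
  obtain ⟨w, hw⟩ := LinearMap.rTensor_surjective N
    (show Function.Surjective f.toAddMonoidHom.toIntLinearMap from hf) z
  exact ⟨mk w, by rw [tmap_mk, intMap_id_left]; exact congrArg mk hw⟩

private lemma rel_le_map_right {g : N →ₗ[R] N'} (hg : Function.Surjective g) :
    rel R M N' ≤ (rel R M N).map (intMap (LinearMap.id : M →ₗ[Rᵐᵒᵖ] M) g).toAddMonoidHom := by
  rw [rel, AddSubgroup.closure_le]
  rintro x ⟨r, m, n', rfl⟩
  obtain ⟨n, rfl⟩ := hg n'
  refine ⟨(MulOpposite.op r • m) ⊗ₜ[ℤ] n - m ⊗ₜ[ℤ] (r • n),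
    AddSubgroup.subset_closure ⟨r, m, n, rfl⟩, ?_⟩
  show (MulOpposite.op r • m) ⊗ₜ[ℤ] g n - m ⊗ₜ[ℤ] g (r • n) = _
  rw [map_smul]

private lemma rel_le_map_left {f : M →ₗ[Rᵐᵒᵖ] M'} (hf : Function.Surjective f) :
    rel R M' N ≤ (rel R M N).map (intMap f (LinearMap.id : N →ₗ[R] N)).toAddMonoidHom := by
  rw [rel, AddSubgroup.closure_le]
  rintro x ⟨r, m', n, rfl⟩
  obtain ⟨m, rfl⟩ := hf m'
  refine ⟨(MulOpposite.op r • m) ⊗ₜ[ℤ] n - m ⊗ₜ[ℤ] (r • n),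
    AddSubgroup.subset_closure ⟨r, m, n, rfl⟩, ?_⟩
  rw [map_sub]
  show f (MulOpposite.op r • m) ⊗ₜ[ℤ] n - f m ⊗ₜ[ℤ] (r • n) = _
  rw [map_smul]

lemma tmap_exact_right {K : Type u} [AddCommGroup K] [Module R K]
    (ι : K →ₗ[R] N) (π : N →ₗ[R] N') (hπ : Function.Surjective π)
    (h : LinearMap.range ι = LinearMap.ker π) (x : Tens R M N)
    (hx : tmap (LinearMap.id : M →ₗ[Rᵐᵒᵖ] M) π x = 0) :
    ∃ y : Tens R M K, tmap (LinearMap.id : M →ₗ[Rᵐᵒᵖ] M) ι y = x := by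
  obtain ⟨z, rfl⟩ := mk_surjective x
  rw [tmap_mk] at hx
  have hz : intMap (LinearMap.id : M →ₗ[Rᵐᵒᵖ] M) π z ∈ rel R M N' := mk_eq_zero_iff.mp hx
  obtain ⟨w, hw, hww⟩ := rel_le_map_right hπ hz
  replace hww : intMap (LinearMap.id : M →ₗ[Rᵐᵒᵖ] M) π w
      = intMap (LinearMap.id : M →ₗ[Rᵐᵒᵖ] M) π z := hww
  have h0 : intMap (LinearMap.id : M →ₗ[Rᵐᵒᵖ] M) π (z - w) = 0 := by
    rw [map_sub, hww, sub_self]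
  have hfg : Function.Exact ι.toAddMonoidHom.toIntLinearMap π.toAddMonoidHom.toIntLinearMap := by
    intro y
    constructor
    · intro hy
      have hy' : y ∈ LinearMap.ker π := LinearMap.mem_ker.mpr hy
      rw [← h] at hy'
      obtain ⟨k, hk⟩ := hy'
      exact ⟨k, hk⟩
    · rintro ⟨k, rfl⟩
      have h2 : π (ι k) = 0 := LinearMap.mem_ker.mp (h ▸ LinearMap.mem_range_self ι k)
      exact h2
  have hex : Function.Exact (LinearMap.lTensor M ι.toAddMonoidHom.toIntLinearMap)
      (LinearMap.lTensor M π.toAddMonoidHom.toIntLinearMap) :=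
    lTensor_exact M hfg hπ
  rw [intMap_id_right] at h0
  obtain ⟨v, hv⟩ := (hex _).mp h0
  refine ⟨mk v, ?_⟩
  rw [tmap_mk, show intMap (LinearMap.id : M →ₗ[Rᵐᵒᵖ] M) ι v = z - w from
    (congrArg (· v) (intMap_id_right ι)).trans hv, map_sub, mk_eq_zero_iff.mpr hw, sub_zero]

lemma tmap_exact_left {K : Type u} [AddCommGroup K] [Module Rᵐᵒᵖ K]
    (ι : K →ₗ[Rᵐᵒᵖ] M) (π : M →ₗ[Rᵐᵒᵖ] M') (hπ : Function.Surjective π)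
    (h : LinearMap.range ι = LinearMap.ker π) (x : Tens R M N)
    (hx : tmap π (LinearMap.id : N →ₗ[R] N) x = 0) :
    ∃ y : Tens R K N, tmap ι (LinearMap.id : N →ₗ[R] N) y = x := by
  obtain ⟨z, rfl⟩ := mk_surjective x
  rw [tmap_mk] at hx
  have hz : intMap π (LinearMap.id : N →ₗ[R] N) z ∈ rel R M' N := mk_eq_zero_iff.mp hx
  obtain ⟨w, hw, hww⟩ := rel_le_map_left hπ hz
  replace hww : intMap π (LinearMap.id : N →ₗ[R] N) w
      = intMap π (LinearMap.id : N →ₗ[R] N) z := hww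
  have h0 : intMap π (LinearMap.id : N →ₗ[R] N) (z - w) = 0 := by
    rw [map_sub, hww, sub_self]
  have hfg : Function.Exact ι.toAddMonoidHom.toIntLinearMap π.toAddMonoidHom.toIntLinearMap := by
    intro y
    constructor
    · intro hy
      have hy' : y ∈ LinearMap.ker π := LinearMap.mem_ker.mpr hy
      rw [← h] at hy'
      obtain ⟨k, hk⟩ := hy'
      exact ⟨k, hk⟩
    · rintro ⟨k, rfl⟩
      have h2 : π (ι k) = 0 := LinearMap.mem_ker.mp (h ▸ LinearMap.mem_range_self ι k)
      exact h2
  have hex : Function.Exact (LinearMap.rTensor N ι.toAddMonoidHom.toIntLinearMap)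
      (LinearMap.rTensor N π.toAddMonoidHom.toIntLinearMap) :=
    rTensor_exact N hfg hπ
  rw [intMap_id_left] at h0
  obtain ⟨v, hv⟩ := (hex _).mp h0
  refine ⟨mk v, ?_⟩
  rw [tmap_mk, show intMap ι (LinearMap.id : N →ₗ[R] N) v = z - w from
    (congrArg (· v) (intMap_id_left ι)).trans hv, map_sub, mk_eq_zero_iff.mpr hw, sub_zero]

lemma flatLeft_of_linearEquiv (e : N ≃ₗ[R] N') (h : NCT.FlatLeft R N) :
    NCT.FlatLeft R N' := by
  intro P P' _ _ _ _ f hf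
  have key : ∀ (Q : Type u) [AddCommGroup Q] [Module Rᵐᵒᵖ Q],
      Function.Bijective (tmap (LinearMap.id : Q →ₗ[Rᵐᵒᵖ] Q) (e : N →ₗ[R] N')) := by
    intro Q _ _
    refine Function.bijective_iff_has_inverse.mpr
      ⟨tmap LinearMap.id (e.symm : N' →ₗ[R] N), fun x => ?_, fun x => ?_⟩
    · rw [tmap_tmap, LinearMap.id_comp]
      have : (e.symm : N' →ₗ[R] N).comp (e : N →ₗ[R] N') = LinearMap.id :=
        LinearMap.ext fun y => e.symm_apply_apply y
      rw [this, tmap_id_apply]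
    · rw [tmap_tmap, LinearMap.id_comp]
      have : (e : N →ₗ[R] N').comp (e.symm : N' →ₗ[R] N) = LinearMap.id :=
        LinearMap.ext fun y => e.apply_symm_apply y
      rw [this, tmap_id_apply]
  intro a b hab
  obtain ⟨a', rfl⟩ := (key P).2 a
  obtain ⟨b', rfl⟩ := (key P).2 b
  have h1 : tmap (LinearMap.id : P' →ₗ[Rᵐᵒᵖ] P') (e : N →ₗ[R] N')
      (tmap f LinearMap.id a')
      = tmap (LinearMap.id : P' →ₗ[Rᵐᵒᵖ] P') (e : N →ₗ[R] N') (tmap f LinearMap.id b') := by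
    rw [tmap_comm, tmap_comm]; exact hab
  have h2 := (key P').1 h1
  rw [h P P' f hf h2]

end Aux

end NCT

section Complexes

open NCT

lemma ab_exactAt_iff (C : CochainComplex AddCommGrpCat.{u} ℤ) (i j k : ℤ)
    (hij : i + 1 = j) (hjk : j + 1 = k) :
    C.ExactAt j ↔ ∀ x : C.X j, C.d j k x = 0 → ∃ y : C.X i, C.d i j y = x := by
  rw [C.exactAt_iff' i j k (by rw [CochainComplex.prev]; omega)
    (by rw [CochainComplex.next]; omega), ShortComplex.ab_exact_iff]
  rfl

lemma moduleCat_exactAt_iff {S : Type u} [Ring S] (C : CochainComplex (ModuleCat.{u} S) ℤ)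
    (i j k : ℤ) (hij : i + 1 = j) (hjk : j + 1 = k) :
    C.ExactAt j ↔ ∀ x : C.X j, C.d j k x = 0 → ∃ y : C.X i, C.d i j y = x := by
  rw [C.exactAt_iff' i j k (by rw [CochainComplex.prev]; omega)
    (by rw [CochainComplex.next]; omega), ShortComplex.moduleCat_exact_iff]
  rfl

variable {R : Type u} [Ring R]

lemma tensCplx_d (Fc : CochainComplex (ModuleCat.{u} Rᵐᵒᵖ) ℤ) (N : ModuleCat.{u} R)
    (i j : ℤ) (x : (tensCplx Fc N).X i) :
    (tensCplx Fc N).d i j x = tmap (Fc.d i j).hom LinearMap.id x :=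
  rfl

lemma acyclic_tens_of_flatLeft (Fc : CochainComplex (ModuleCat.{u} Rᵐᵒᵖ) ℤ)
    (hacyclic : ∀ n : ℤ, Fc.ExactAt n) (N : ModuleCat.{u} R) (hN : NCT.FlatLeft R N)
    (n : ℤ) : (tensCplx Fc N).ExactAt n := by
  rw [ab_exactAt_iff _ (n-1) n (n+1) (by omega) rfl]
  intro (x : Tens R (Fc.X n) N) hx
  replace hx : tmap (Fc.d n (n+1)).hom LinearMap.id x = 0 := hx
  set d₁ : Fc.X (n-1) →ₗ[Rᵐᵒᵖ] Fc.X n := (Fc.d (n-1) n).hom with hd₁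
  set d₂ : Fc.X n →ₗ[Rᵐᵒᵖ] Fc.X (n+1) := (Fc.d n (n+1)).hom with hd₂
  set Z : Submodule Rᵐᵒᵖ (Fc.X n) := LinearMap.ker d₂ with hZ
  set c : Fc.X n →ₗ[Rᵐᵒᵖ] LinearMap.range d₂ := d₂.rangeRestrict with hc
  have hcs : Function.Surjective c := LinearMap.surjective_rangeRestrict d₂
  have hZc : LinearMap.range Z.subtype = LinearMap.ker c := by
    rw [hc, LinearMap.ker_rangeRestrict, Submodule.range_subtype]
  have hinj : Function.Injective ((LinearMap.range d₂).subtype) := Submodule.injective_subtype _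
  have h1 : tmap c (LinearMap.id : N →ₗ[R] N) x = 0 := by
    apply hN _ _ ((LinearMap.range d₂).subtype) hinj
    rw [map_zero, tmap_tmap, LinearMap.id_comp]
    have he : ((LinearMap.range d₂).subtype).comp c = d₂ := LinearMap.ext fun _ => rfl
    rw [he]
    exact hx
  obtain ⟨y₁, hy₁⟩ := tmap_exact_left Z.subtype c hcs hZc x h1
  have hmem : ∀ m : Fc.X (n-1), d₁ m ∈ Z := by
    intro m
    have h2 : d₂ (d₁ m) = (Fc.d (n-1) n ≫ Fc.d n (n+1)).hom m := rfl
    rw [LinearMap.mem_ker, h2, Fc.d_comp_d]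
    rfl
  set d₁' : Fc.X (n-1) →ₗ[Rᵐᵒᵖ] Z := LinearMap.codRestrict Z d₁ hmem with hd₁'
  have hd₁s : Function.Surjective d₁' := by
    rintro ⟨z, hz⟩
    obtain ⟨w, hw⟩ := (moduleCat_exactAt_iff Fc (n-1) n (n+1) (by omega) rfl).mp
      (hacyclic n) z (LinearMap.mem_ker.mp hz)
    exact ⟨w, Subtype.ext hw⟩
  obtain ⟨y₂, hy₂⟩ := tmap_surjective_left (N := N) hd₁s y₁
  refine ⟨y₂, ?_⟩
  show tmap (Fc.d (n-1) n).hom LinearMap.id y₂ = x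
  have he : (Z.subtype).comp d₁' = d₁ := LinearMap.ext fun _ => rfl
  calc tmap (Fc.d (n-1) n).hom LinearMap.id y₂
      = tmap Z.subtype LinearMap.id (tmap d₁' LinearMap.id y₂) := by
        rw [tmap_tmap, LinearMap.id_comp, he]
    _ = x := by rw [hy₂, hy₁]

lemma acyclic_tens_of_ses (Fc : CochainComplex (ModuleCat.{u} Rᵐᵒᵖ) ℤ)
    (hflat : ∀ n : ℤ, NCT.FlatRight R (Fc.X n))
    {K G J : Type u} [AddCommGroup K] [Module R K] [AddCommGroup G] [Module R G]
    [AddCommGroup J] [Module R J]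
    (ι : K →ₗ[R] G) (π : G →ₗ[R] J) (hι : Function.Injective ι) (hπ : Function.Surjective π)
    (hker : LinearMap.range ι = LinearMap.ker π)
    (hK : ∀ n : ℤ, (tensCplx Fc (ModuleCat.of R K)).ExactAt n)
    (hG : ∀ n : ℤ, (tensCplx Fc (ModuleCat.of R G)).ExactAt n)
    (n : ℤ) : (tensCplx Fc (ModuleCat.of R J)).ExactAt n := by
  rw [ab_exactAt_iff _ (n-1) n (n+1) (by omega) rfl]
  intro (x : Tens R (Fc.X n) J) hx
  replace hx : tmap (Fc.d n (n+1)).hom LinearMap.id x = 0 := hx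
  obtain ⟨xt, hxt⟩ := tmap_surjective_right (M := Fc.X n) hπ x
  have h2 : tmap LinearMap.id π (tmap (Fc.d n (n+1)).hom LinearMap.id xt) = 0 := by
    rw [tmap_comm, hxt]; exact hx
  obtain ⟨z, hz⟩ := tmap_exact_right ι π hπ hker _ h2
  have h3 : tmap LinearMap.id ι (tmap (Fc.d (n+1) (n+2)).hom LinearMap.id z) = 0 := by
    rw [tmap_comm, hz, tmap_tmap, LinearMap.comp_id]
    have hdd : (Fc.d (n+1) (n+2)).hom.comp (Fc.d n (n+1)).hom = 0 := by
        rw [← ModuleCat.hom_comp, Fc.d_comp_d, ModuleCat.hom_zero]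
    rw [hdd, tmap_zero_left]
    rfl
  have h4 : tmap (Fc.d (n+1) (n+2)).hom LinearMap.id z = 0 := by
    apply hflat (n+2) K G ι hι
    rw [map_zero]
    exact h3
  obtain ⟨w, hw⟩ : ∃ w : Tens R (Fc.X n) K, tmap (Fc.d n (n+1)).hom LinearMap.id w = z :=
    (ab_exactAt_iff _ n (n+1) (n+2) rfl (by omega)).mp (hK (n+1)) z
    (by exact h4)
  replace hw : tmap (Fc.d n (n+1)).hom (LinearMap.id : K →ₗ[R] K) w = z := hw
  have h5 : tmap (Fc.d n (n+1)).hom LinearMap.id (xt - tmap LinearMap.id ι w) = 0 := by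
    rw [map_sub, ← tmap_comm, hw, hz, sub_self]
  obtain ⟨yt, hyt⟩ : ∃ yt : Tens R (Fc.X (n-1)) G,
      tmap (Fc.d (n-1) n).hom LinearMap.id yt = xt - tmap LinearMap.id ι w :=
    (ab_exactAt_iff _ (n-1) n (n+1) (by omega) rfl).mp (hG n)
    (xt - tmap LinearMap.id ι w) (by exact h5)
  replace hyt : tmap (Fc.d (n-1) n).hom (LinearMap.id : G →ₗ[R] G) yt
      = xt - tmap LinearMap.id ι w := hyt
  refine ⟨tmap LinearMap.id π yt, ?_⟩
  show tmap (Fc.d (n-1) n).hom (LinearMap.id : J →ₗ[R] J) (tmap LinearMap.id π yt) = x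
  rw [← tmap_comm, hyt, map_sub, tmap_tmap, LinearMap.id_comp]
  have hπι : π.comp ι = (0 : K →ₗ[R] J) := by
    apply LinearMap.ext
    intro k
    have : ι k ∈ LinearMap.ker π := hker ▸ LinearMap.mem_range_self ι k
    simpa using this
  rw [hπι, tmap_zero_right]
  show tmap LinearMap.id π xt - 0 = x
  rw [sub_zero, hxt]

/-- A bounded version of `HasFiniteFlatDimension`. -/
def ResBound (R : Type u) [Ring R] (m : ℕ) (J : Type u) [AddCommGroup J] [Module R J] : Prop :=
  ∃ (G : ℕ → ModuleCat.{u} R) (d : ∀ n : ℕ, G (n + 1) ⟶ G n) (ε : G 0 ⟶ ModuleCat.of R J),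
    (∀ n, NCT.FlatLeft R (G n)) ∧ Function.Surjective ε ∧
    LinearMap.range (d 0).hom = LinearMap.ker ε.hom ∧
    (∀ n, LinearMap.range (d (n + 1)).hom = LinearMap.ker (d n).hom) ∧
    (∀ n, m < n → Subsingleton (G n))

lemma acyclic_tens_of_resBound (Fc : CochainComplex (ModuleCat.{u} Rᵐᵒᵖ) ℤ)
    (hacyclic : ∀ n : ℤ, Fc.ExactAt n)
    (hflat : ∀ n : ℤ, NCT.FlatRight R (Fc.X n)) :
    ∀ (m : ℕ) (J : Type u) [AddCommGroup J] [Module R J], ResBound R m J →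
      ∀ n : ℤ, (tensCplx Fc (ModuleCat.of R J)).ExactAt n := by
  intro m
  induction m with
  | zero =>
    rintro J _ _ ⟨G, d, ε, hf, hs, h0, hres, hv⟩ n
    have hG1 : Subsingleton (G 1) := hv 1 (by omega)
    have hbot : LinearMap.ker ε.hom = ⊥ := by
      rw [← h0, eq_bot_iff]
      rintro x ⟨y, rfl⟩
      have : y = 0 := Subsingleton.elim _ _
      simp [this]
    have hbij : Function.Bijective ε.hom := ⟨LinearMap.ker_eq_bot.mp hbot, hs⟩
    exact acyclic_tens_of_flatLeft Fc hacyclic (ModuleCat.of R J)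
      (flatLeft_of_linearEquiv (LinearEquiv.ofBijective ε.hom hbij) (hf 0)) n
  | succ m ih =>
    rintro J _ _ ⟨G, d, ε, hf, hs, h0, hres, hv⟩ n
    set Kmod : Submodule R (G 0) := LinearMap.ker ε.hom with hKmod
    have hK : ResBound R m ↥Kmod := by
      refine ⟨fun k => G (k+1), fun k => d (k+1),
        ModuleCat.ofHom (LinearMap.codRestrict Kmod (d 0).hom
          (fun y => h0 ▸ LinearMap.mem_range_self (d 0).hom y)),
        fun k => hf (k+1), ?_, ?_, fun k => hres (k+1), fun k hk => hv (k+1) (by omega)⟩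
      · rintro ⟨z, hz⟩
        have hz' : z ∈ LinearMap.range (d 0).hom := by rw [h0]; exact hz
        obtain ⟨y, hy⟩ := hz'
        exact ⟨y, Subtype.ext hy⟩
      · rw [ModuleCat.hom_ofHom, LinearMap.ker_codRestrict]
        exact hres 0
    have hKac := ih ↥Kmod hK
    have hGac := acyclic_tens_of_flatLeft Fc hacyclic (G 0) (hf 0)
    exact acyclic_tens_of_ses Fc hflat Kmod.subtype ε.hom (Submodule.injective_subtype _) hs
      (by rw [Submodule.range_subtype]) hKac (fun k => hGac k) n

end Complexes

/-- **Acyclic complexes of flats are F-totally acyclic over "Gorenstein" rings.**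
Let `R` be a ring such that every injective left `R`-module has finite flat dimension.
Then every acyclic complex `F^•` of flat right `R`-modules is F-totally acyclic, i.e.
`F^• ⊗_R J` is acyclic for every injective left `R`-module `J`. -/
theorem F_totally_acyclic_of_acyclic_of_flat_terms
    (R : Type u) [Ring R]
    (hGor : ∀ (J : Type u) [AddCommGroup J] [Module R J], Module.Injective R J →
      HasFiniteFlatDimension R J)
    (Fc : CochainComplex (ModuleCat.{u} Rᵐᵒᵖ) ℤ)
    (hacyclic : ∀ n : ℤ, Fc.ExactAt n)
    (hflat : ∀ n : ℤ, NCT.FlatRight R (Fc.X n)) :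
    ∀ (J : ModuleCat.{u} R), Module.Injective R J →
      ∀ n : ℤ, (tensCplx Fc J).ExactAt n := by
  intro J hJ n
  obtain ⟨m, G, d, ε, h1, h2, h3, h4, h5⟩ := hGor ↥J hJ
  exact acyclic_tens_of_resBound Fc hacyclic hflat m ↥J ⟨G, d, ε, h1, h2, h3, h4, h5⟩ n
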